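/- The star K_{1,n-1} on n vertices has exactly 2^{n-1} + n - 1 subtrees, and every tree on n ≥ 2 vertices other than the star has strictly fewer subtrees. -/

import Mathlib

open SimpleGraph

/-- The number of subtrees of a graph `G`: nonempty vertex subsets inducing a
connected subgraph. -/
noncomputable def numSubtrees {V : Type*} [Fintype V] (G : SimpleGraph V) : ℕ :=
  {S : Set V | S.Nonempty ∧ (G.induce S).Connected}.ncard

/-- The star `K_{1,n-1}` on `n` vertices: vertex `0` is adjacent to all others. -/
def starGraph (n : ℕ) : SimpleGraph (Fin n) :=
  SimpleGraph.fromRel (fun i _ => (i : ℕ) = 0)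

lemma ncard_mem_sets {α : Type*} [Fintype α] (a : α) :
    {S : Set α | a ∈ S}.ncard = 2 ^ (Fintype.card α - 1) := by
  classical
  rw [← Nat.card_coe_set_eq]
  have e : {S : Set α // a ∈ S} ≃ Set {x : α // x ≠ a} :=
    { toFun := fun S => {x | ↑x ∈ S.1}
      invFun := fun T => ⟨{x | x = a ∨ ∃ h : x ≠ a, (⟨x, h⟩ : {x : α // x ≠ a}) ∈ T}, Or.inl rfl⟩
      left_inv := by
        rintro ⟨S, hS⟩
        ext x
        by_cases hx : x = a
        · subst hx; simp [hS]
        · simp [hx]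
      right_inv := by
        intro T
        ext ⟨x, hx⟩
        simp [hx] }
  have : Nat.card ↑{S : Set α | a ∈ S} = Nat.card (Set {x : α // x ≠ a}) := Nat.card_congr e
  rw [this, Nat.card_eq_fintype_card, Fintype.card_set]
  congr 1
  rw [Fintype.card_subtype_compl, Fintype.card_subtype_eq]

lemma walk_prop {V : Type*} {G : SimpleGraph V} {P : V → Prop}
    (h : ∀ x y, G.Adj x y → P x → P y) {u v : V} (p : G.Walk u v) (hu : P u) : P v := by
  induction p with
  | nil => exact hu
  | cons h' p ih => exact ih (h _ _ h' hu)

lemma star_adj {n : ℕ} [NeZero n] {i j : Fin n} :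
    (_root_.starGraph n).Adj i j ↔ i ≠ j ∧ (i = 0 ∨ j = 0) := by
  constructor
  · rintro ⟨hne, h | h⟩ <;> exact ⟨hne, by rw [Fin.val_eq_zero_iff] at h; simp [h]⟩
  · rintro ⟨hne, h | h⟩
    · exact ⟨hne, Or.inl (by simp [h])⟩
    · exact ⟨hne, Or.inr (by simp [h])⟩

lemma star_subtree_iff {n : ℕ} [NeZero n] (S : Set (Fin n)) :
    (S.Nonempty ∧ ((_root_.starGraph n).induce S).Connected) ↔ ((0 : Fin n) ∈ S ∨ ∃ v, S = {v}) := by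
  constructor
  · rintro ⟨hne, hconn⟩
    by_contra hcon
    push_neg at hcon
    obtain ⟨h0, hsing⟩ := hcon
    obtain ⟨a, ha⟩ := hne
    obtain ⟨b, hb, hab⟩ : ∃ b ∈ S, b ≠ a := by
      by_contra hc
      push_neg at hc
      exact hsing a (Set.eq_singleton_iff_unique_mem.2 ⟨ha, hc⟩)
    have hr := hconn.preconnected ⟨a, ha⟩ ⟨b, hb⟩
    obtain ⟨p⟩ := hr
    have : (⟨b, hb⟩ : S) = ⟨a, ha⟩ := by
      refine walk_prop (P := fun z => z = ⟨a, ha⟩) ?_ p rfl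
      rintro ⟨x, hx⟩ ⟨y, hy⟩ hadj _
      have hxy : (_root_.starGraph n).Adj x y := hadj
      rw [star_adj] at hxy
      rcases hxy.2 with h | h
      · exact absurd (h ▸ hx) h0
      · exact absurd (h ▸ hy) h0
    exact hab (congrArg Subtype.val this)
  · rintro (h0 | ⟨v, rfl⟩)
    · refine ⟨⟨0, h0⟩, ?_⟩
      haveI : Nonempty ↥S := ⟨⟨0, h0⟩⟩
      have hadj : ∀ x : S, x ≠ ⟨0, h0⟩ → ((_root_.starGraph n).induce S).Adj x ⟨0, h0⟩ := by
        rintro ⟨x, hx⟩ hne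
        show (_root_.starGraph n).Adj x 0
        rw [star_adj]
        exact ⟨fun h => hne (Subtype.ext h), Or.inr rfl⟩
      refine ⟨fun a b => ?_⟩
      by_cases ha : a = ⟨0, h0⟩ <;> by_cases hb : b = ⟨0, h0⟩
      · exact ha ▸ hb ▸ Reachable.refl _
      · exact ha ▸ ((hadj b hb).reachable).symm
      · exact hb ▸ (hadj a ha).reachable
      · exact ((hadj a ha).reachable).trans ((hadj b hb).reachable).symm
    · haveI : Nonempty ↥({v} : Set (Fin n)) := ⟨⟨v, rfl⟩⟩
      refine ⟨⟨v, rfl⟩, ?_⟩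
      refine ⟨fun a b => ?_⟩
      have : a = b := Subtype.ext (a.2.trans b.2.symm)
      exact this ▸ Reachable.refl _

lemma star_count {n : ℕ} (hn : 2 ≤ n) :
    numSubtrees (_root_.starGraph n) = 2 ^ (n - 1) + n - 1 := by
  haveI : NeZero n := ⟨by omega⟩
  classical
  have hset : {S : Set (Fin n) | S.Nonempty ∧ ((_root_.starGraph n).induce S).Connected} =
      {S : Set (Fin n) | (0 : Fin n) ∈ S} ∪ ((fun v => ({v} : Set (Fin n))) '' {v | v ≠ 0}) := by
    ext S
    rw [Set.mem_setOf_eq, star_subtree_iff]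
    constructor
    · rintro (h0 | ⟨v, rfl⟩)
      · exact Or.inl h0
      · by_cases hv : v = 0
        · exact Or.inl (by simp [hv])
        · exact Or.inr ⟨v, hv, rfl⟩
    · rintro (h0 | ⟨v, hv, rfl⟩)
      · exact Or.inl h0
      · exact Or.inr ⟨v, rfl⟩
  rw [numSubtrees, hset, Set.ncard_union_eq]
  · rw [ncard_mem_sets, Set.ncard_image_of_injOn (fun x _ y _ h => by
      simpa using Set.singleton_eq_singleton_iff.1 h)]
    have h1 : ({v : Fin n | v ≠ 0} : Set (Fin n)).ncard = n - 1 := by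
      rw [← Nat.card_coe_set_eq, Nat.card_eq_fintype_card]
      have : Fintype.card {v : Fin n // v ≠ 0} = n - 1 := by
        rw [Fintype.card_subtype_compl, Fintype.card_subtype_eq, Fintype.card_fin]
      exact this
    rw [h1, Fintype.card_fin]
    have h2 : 1 ≤ 2 ^ (n - 1) := Nat.one_le_two_pow
    omega
  · rw [Set.disjoint_left]
    rintro S h0 ⟨v, hv, rfl⟩
    exact hv (Set.mem_singleton_iff.1 h0).symm
lemma exists_adj_in {V : Type*} {G : SimpleGraph V} {S : Set V}
    (hconn : (G.induce S).Connected) (h2 : ∃ x ∈ S, ∃ y ∈ S, x ≠ y) :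
    ∀ v ∈ S, ∃ w ∈ S, G.Adj v w := by
  intro v hv
  obtain ⟨x, hx, y, hy, hxy⟩ := h2
  obtain ⟨u, hu, huv⟩ : ∃ u ∈ S, u ≠ v := by
    by_cases hxv : x = v
    · exact ⟨y, hy, fun h => hxy (hxv.trans h.symm)⟩
    · exact ⟨x, hx, hxv⟩
  obtain ⟨p⟩ := hconn.preconnected ⟨v, hv⟩ ⟨u, hu⟩
  have hne : (⟨v, hv⟩ : S) ≠ ⟨u, hu⟩ := fun h => huv (congrArg Subtype.val h).symm
  obtain ⟨w, hw⟩ : ∃ w : S, (G.induce S).Adj ⟨v, hv⟩ w := by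
    cases p with
    | nil => exact absurd rfl hne
    | cons h' p => exact ⟨_, h'⟩
  exact ⟨w.1, w.2, hw⟩

lemma tree_bound {V : Type*} [Fintype V] {G : SimpleGraph V} (hG : G.IsTree)
    {a b c d : V} (hab : G.Adj a b) (hcd : G.Adj c d)
    (hac : a ≠ c) (had : a ≠ d) (hbc : b ≠ c) (hbd : b ≠ d) :
    numSubtrees G ≤ Fintype.card V + (2 ^ (Fintype.card V - 1) - 2) := by
  classical
  set n := Fintype.card V
  have hedge : G.edgeFinset.card = n - 1 := by
    have := hG.card_edgeFinset
    omega
  set bad : Finset (Sym2 V) := {s(a, b), s(c, d)} with hbad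
  set 𝒮 : Set (Set V) := {S : Set V | S.Nonempty ∧ (G.induce S).Connected} with h𝒮
  set 𝒮₁ : Set (Set V) := (fun v => ({v} : Set V)) '' Set.univ with h𝒮₁
  set 𝒮₂ : Set (Set V) := {S | (S.Nonempty ∧ (G.induce S).Connected) ∧ ∃ x ∈ S, ∃ y ∈ S, x ≠ y}
    with h𝒮₂
  have hsub : 𝒮 ⊆ 𝒮₁ ∪ 𝒮₂ := by
    rintro S ⟨⟨v, hv⟩, hconn⟩
    by_cases h2 : ∃ x ∈ S, ∃ y ∈ S, x ≠ y
    · exact Or.inr ⟨⟨⟨v, hv⟩, hconn⟩, h2⟩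
    · push_neg at h2
      refine Or.inl ⟨v, Set.mem_univ v, ?_⟩
      show ({v} : Set V) = S
      ext x
      simp only [Set.mem_singleton_iff]
      exact ⟨fun hx => hx ▸ hv, fun hx => h2 x hx v hv⟩
  have h1 : 𝒮₁.ncard ≤ n := by
    calc 𝒮₁.ncard ≤ (Set.univ : Set V).ncard := Set.ncard_image_le (Set.toFinite _)
    _ = n := by rw [Set.ncard_univ, Nat.card_eq_fintype_card]
  -- the injection for 𝒮₂
  set f : Set V → Finset (Sym2 V) := fun S => G.edgeFinset.filter (fun e => ∀ x ∈ e, x ∈ S)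
    with hf
  have hSeq : ∀ S ∈ 𝒮₂, S = {v | ∃ e ∈ f S, v ∈ e} := by
    rintro S ⟨⟨hne, hconn⟩, h2⟩
    ext v
    constructor
    · intro hv
      obtain ⟨w, hw, hadj⟩ := exists_adj_in hconn h2 v hv
      refine ⟨s(v, w), ?_, Sym2.mem_mk_left _ _⟩
      rw [hf]
      simp only [Finset.mem_filter, mem_edgeFinset, mem_edgeSet]
      exact ⟨hadj, by intro x hx; rcases Sym2.mem_iff.1 hx with rfl | rfl <;> [exact hv; exact hw]⟩
    · rintro ⟨e, he, hv⟩
      rw [hf] at he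
      simp only [Finset.mem_filter] at he
      exact he.2 v hv
  have hmem : ∀ S ∈ 𝒮₂, f S ∈ ((G.edgeFinset.powerset.erase ∅).erase bad : Finset (Finset (Sym2 V))) := by
    rintro S hS
    obtain ⟨⟨hne, hconn⟩, h2⟩ := hS
    rw [Finset.mem_erase, Finset.mem_erase, Finset.mem_powerset]
    refine ⟨?_, ?_, Finset.filter_subset _ _⟩
    · -- f S ≠ bad
      intro hfbad
      have hmemS : ∀ x y : V, s(x, y) ∈ f S → x ∈ S := by
        intro x y hxy
        rw [hf] at hxy
        simp only [Finset.mem_filter] at hxy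
        exact hxy.2 x (Sym2.mem_mk_left _ _)
      have habf : s(a, b) ∈ f S := by rw [hfbad, hbad]; simp
      have hcdf : s(c, d) ∈ f S := by rw [hfbad, hbad]; simp
      have haS : a ∈ S := hmemS a b habf
      have hbS : b ∈ S := hmemS b a (by rwa [Sym2.eq_swap] at habf)
      have hcS : c ∈ S := hmemS c d hcdf
      obtain ⟨p⟩ := hconn.preconnected ⟨a, haS⟩ ⟨c, hcS⟩
      have : (⟨c, hcS⟩ : S).1 = a ∨ (⟨c, hcS⟩ : S).1 = b := by
        refine walk_prop (P := fun z : S => z.1 = a ∨ z.1 = b) ?_ p (Or.inl rfl)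
        rintro ⟨x, hx⟩ ⟨y, hy⟩ hadj hP
        have hxy : G.Adj x y := hadj
        have hef : s(x, y) ∈ f S := by
          rw [hf]
          simp only [Finset.mem_filter, mem_edgeFinset, mem_edgeSet]
          exact ⟨hxy, by intro z hz; rcases Sym2.mem_iff.1 hz with rfl | rfl <;> [exact hx; exact hy]⟩
        rw [hfbad, hbad] at hef
        simp only [Finset.mem_insert, Finset.mem_singleton] at hef
        rcases hef with hef | hef <;> rcases Sym2.eq_iff.1 hef with ⟨rfl, rfl⟩ | ⟨rfl, rfl⟩
        · exact Or.inr rfl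
        · exact Or.inl rfl
        · rcases hP with rfl | rfl
          · exact absurd rfl hac
          · exact absurd rfl hbc
        · rcases hP with rfl | rfl
          · exact absurd rfl had
          · exact absurd rfl hbd
      rcases this with h | h
      · exact hac h.symm
      · exact hbc h.symm
    · -- f S ≠ ∅
      intro hfe
      obtain ⟨v, hv⟩ := hne
      obtain ⟨w, hw, hadj⟩ := exists_adj_in hconn h2 v hv
      have : s(v, w) ∈ f S := by
        rw [hf]
        simp only [Finset.mem_filter, mem_edgeFinset, mem_edgeSet]
        exact ⟨hadj, by intro z hz; rcases Sym2.mem_iff.1 hz with rfl | rfl <;> [exact hv; exact hw]⟩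
      rw [hfe] at this
      exact absurd this (Finset.notMem_empty _)
  have hinj : Set.InjOn f 𝒮₂ := by
    intro S1 hS1 S2 hS2 hf12
    rw [hSeq S1 hS1, hSeq S2 hS2, hf12]
  have h2card : 𝒮₂.ncard ≤ 2 ^ (n - 1) - 2 := by
    have hmem' : ∀ S ∈ 𝒮₂,
        f S ∈ (↑((G.edgeFinset.powerset.erase ∅).erase bad) : Set (Finset (Sym2 V))) :=
      fun S hS => Finset.mem_coe.2 (hmem S hS)
    have hle := Set.ncard_le_ncard_of_injOn f hmem' hinj (Set.toFinite _)
    rw [Set.ncard_coe_finset] at hle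
    refine hle.trans ?_
    have hbadmem : bad ∈ G.edgeFinset.powerset.erase ∅ := by
      rw [Finset.mem_erase, Finset.mem_powerset]
      constructor
      · rw [hbad]; simp
      · rw [hbad]
        intro e he
        simp only [Finset.mem_insert, Finset.mem_singleton] at he
        rcases he with rfl | rfl <;> rw [mem_edgeFinset, mem_edgeSet] <;> [exact hab; exact hcd]
    rw [Finset.card_erase_of_mem hbadmem, Finset.card_erase_of_mem (by
      rw [Finset.mem_powerset]; exact Finset.empty_subset _), Finset.card_powerset, hedge]
    omega
  calc numSubtrees G = 𝒮.ncard := rfl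
    _ ≤ (𝒮₁ ∪ 𝒮₂).ncard := Set.ncard_le_ncard hsub (Set.toFinite _)
    _ ≤ 𝒮₁.ncard + 𝒮₂.ncard := Set.ncard_union_le _ _
    _ ≤ n + (2 ^ (n - 1) - 2) := Nat.add_le_add h1 h2card
section
variable {V : Type*} {G : SimpleGraph V}

lemma no_triangle (hG : G.IsAcyclic) {x y z : V}
    (hxy : G.Adj x y) (hyz : G.Adj y z) (hxz : G.Adj x z) : False := by
  rw [isAcyclic_iff_path_unique] at hG
  have hp1 : (Walk.cons hxz Walk.nil : G.Walk x z).IsPath := by simp [hxz.ne]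
  have hp2 : (Walk.cons hxy (Walk.cons hyz Walk.nil) : G.Walk x z).IsPath := by
    simp [hxy.ne, hyz.ne, hxz.ne]
  have := hG ⟨_, hp1⟩ ⟨_, hp2⟩
  have hlen := congrArg (fun p : G.Path x z => p.1.length) this
  simp [Walk.length_cons] at hlen

lemma exists_neighbor [Fintype V] (hconn : G.Connected) (h2 : 2 ≤ Fintype.card V) (v : V) :
    ∃ w, G.Adj v w := by
  obtain ⟨u, hu⟩ := Fintype.exists_ne_of_one_lt_card (by omega) v
  obtain ⟨p⟩ := hconn.preconnected v u
  cases p with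
  | nil => exact absurd rfl hu.symm
  | cons h' p => exact ⟨_, h'⟩

lemma center_of_no_disjoint [Fintype V] (hG : G.IsTree) (h2 : 2 ≤ Fintype.card V)
    (h : ∀ a b c d : V, G.Adj a b → G.Adj c d → a = c ∨ a = d ∨ b = c ∨ b = d) :
    ∃ c : V, ∀ v : V, v ≠ c → G.Adj c v := by
  classical
  obtain ⟨v⟩ : Nonempty V := Fintype.card_pos_iff.1 (by omega)
  obtain ⟨b, hab⟩ := exists_neighbor hG.isConnected h2 v
  set a := v
  -- either every edge contains a, or every edge contains b
  have hkey : (∀ x y : V, G.Adj x y → a = x ∨ a = y) ∨ (∀ x y : V, G.Adj x y → b = x ∨ b = y) := by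
    by_contra hc
    push_neg at hc
    obtain ⟨⟨x1, y1, he1, hax1, hay1⟩, ⟨x2, y2, he2, hbx2, hby2⟩⟩ := hc
    obtain ⟨z, hbz, hza⟩ : ∃ z, G.Adj b z ∧ z ≠ a := by
      rcases h x1 y1 a b he1 hab with h' | h' | h' | h'
      · exact absurd h'.symm hax1
      · refine ⟨y1, ?_, fun hh => hay1 hh.symm⟩
        rw [h'] at he1; exact he1
      · exact absurd h'.symm hay1
      · refine ⟨x1, ?_, fun hh => hax1 hh.symm⟩
        rw [h'] at he1; exact he1.symm
    obtain ⟨w, haw, hwb⟩ : ∃ w, G.Adj a w ∧ w ≠ b := by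
      rcases h x2 y2 a b he2 hab with h' | h' | h' | h'
      · refine ⟨y2, ?_, fun hh => hby2 hh.symm⟩
        rw [h'] at he2; exact he2
      · exact absurd h'.symm hbx2
      · refine ⟨x2, ?_, fun hh => hbx2 hh.symm⟩
        rw [h'] at he2; exact he2.symm
      · exact absurd h'.symm hby2
    rcases h a w b z haw hbz with h' | h' | h' | h'
    · exact hab.ne h'
    · exact hza h'.symm
    · exact hwb h'
    · subst h'
      exact no_triangle hG.IsAcyclic hab hbz haw
  rcases hkey with hk | hk
  · refine ⟨a, fun v hv => ?_⟩
    obtain ⟨w, hvw⟩ := exists_neighbor hG.isConnected h2 v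
    rcases hk v w hvw with h' | h'
    · exact absurd h'.symm hv
    · rw [← h'] at hvw; exact hvw.symm
  · refine ⟨b, fun v hv => ?_⟩
    obtain ⟨w, hvw⟩ := exists_neighbor hG.isConnected h2 v
    rcases hk v w hvw with h' | h'
    · exact absurd h'.symm hv
    · rw [← h'] at hvw; exact hvw.symm

lemma iso_star_of_center [Fintype V] (hG : G.IsTree) (h2 : 2 ≤ Fintype.card V)
    {c : V} (hc : ∀ v : V, v ≠ c → G.Adj c v) :
    Nonempty (G ≃g _root_.starGraph (Fintype.card V)) := by
  haveI : NeZero (Fintype.card V) := ⟨by omega⟩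
  have hGadj : ∀ u v : V, G.Adj u v ↔ u ≠ v ∧ (u = c ∨ v = c) := by
    intro u v
    constructor
    · intro huv
      refine ⟨huv.ne, ?_⟩
      by_contra hcon
      push_neg at hcon
      exact no_triangle hG.IsAcyclic (hc u hcon.1) huv (hc v hcon.2)
    · rintro ⟨hne, rfl | rfl⟩
      · exact hc v hne.symm
      · exact (hc u hne).symm
  let e0 : V ≃ Fin (Fintype.card V) := Fintype.equivFinOfCardEq rfl
  let e : V ≃ Fin (Fintype.card V) := e0.trans (Equiv.swap (e0 c) 0)
  have he : e c = 0 := by simp [e, Equiv.swap_apply_left]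
  refine ⟨⟨e, ?_⟩⟩
  intro u v
  rw [star_adj, hGadj u v, ← he]
  simp [Equiv.apply_eq_iff_eq, ne_eq, EmbeddingLike.apply_eq_iff_eq]

end

theorem star_max_numSubtrees (n : ℕ) (hn : 2 ≤ n) :
    numSubtrees (_root_.starGraph n) = 2 ^ (n - 1) + n - 1 ∧
    ∀ (V : Type) [Fintype V] (G : SimpleGraph V), G.IsTree →
      Fintype.card V = n → ¬ Nonempty (G ≃g _root_.starGraph n) →
      numSubtrees G < numSubtrees (_root_.starGraph n) := by
  refine ⟨star_count hn, ?_⟩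
  intro V _ G hT hcard hniso
  subst hcard
  by_cases hdisj : ∃ a b c d : V, G.Adj a b ∧ G.Adj c d ∧ a ≠ c ∧ a ≠ d ∧ b ≠ c ∧ b ≠ d
  · obtain ⟨a, b, c, d, hab, hcd, h1, h2, h3, h4⟩ := hdisj
    have hb := tree_bound hT hab hcd h1 h2 h3 h4
    rw [star_count hn]
    have hp : 2 ≤ 2 ^ (Fintype.card V - 1) := by
      calc (2 : ℕ) = 2 ^ 1 := by norm_num
      _ ≤ 2 ^ (Fintype.card V - 1) := Nat.pow_le_pow_right (by norm_num) (by omega)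
    omega
  · exfalso
    apply hniso
    have h' : ∀ a b c d : V, G.Adj a b → G.Adj c d → a = c ∨ a = d ∨ b = c ∨ b = d := by
      intro a b c d hab hcd
      by_contra hq
      push_neg at hq
      exact hdisj ⟨a, b, c, d, hab, hcd, hq.1, hq.2.1, hq.2.2.1, hq.2.2.2⟩
    obtain ⟨cc, hcc⟩ := center_of_no_disjoint hT hn h'
    exact iso_star_of_center hT hn hcc
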